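/- Let G = (V, E) be a cubic graph and let (X, Y) be the corresponding instance of MLA. For every edge {v_i, v_j} ∈ E and every feasible labeling of (X, Y), the total cost of the operations labeling the four unmatched characters of the block B_X-VE(e_{i,j}) is at least 2. -/

import Mathlib

namespace MLA

/-! ### Generic labelings of aligned genomes -/

/-- An operation labeling a substring of the genome `X`: the substring of length
`len` starting at position `start`; `src = none` means a loss, `src = some s`
means a duplication coming from the identical occurrence starting at `s`. -/
structure Op where
  start : ℕ
  len : ℕ
  src : Option ℕ
deriving DecidableEq

/-- Cost of an operation: a duplication costs `1`, a loss of length `z` costs `z`. -/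
def Op.cost (o : Op) : ℕ := if o.src = none then o.len else 1

/-- The positions covered by (the target substring of) an operation. -/
def Op.covers (o : Op) (p : ℕ) : Prop := o.start ≤ p ∧ p < o.start + o.len

instance (o : Op) (p : ℕ) : Decidable (o.covers p) := by
  unfold Op.covers; infer_instance

/-- Validity of an operation with respect to the genome `X`: nonempty target
inside `X`, and a duplication comes from a different occurrence in `X` of a
string identical to its target substring. -/
def Op.valid {α : Type*} (X : List α) (o : Op) : Prop :=
  1 ≤ o.len ∧ o.start + o.len ≤ X.length ∧
    ∀ s, o.src = some s → s ≠ o.start ∧ s + o.len ≤ X.length ∧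
      ∀ t < o.len, X[s + t]? = X[o.start + t]?

/-- A duplication from occurrence `s` to occurrence `t` is maximal if the
characters immediately to the left of `s` and `t` differ (or one does not
exist) and likewise on the right. -/
def Op.maximalDup {α : Type*} (X : List α) (o : Op) : Prop :=
  ∃ s, o.src = some s ∧
    (s = 0 ∨ o.start = 0 ∨ X[s - 1]? ≠ X[o.start - 1]?) ∧
    (X[s + o.len]? = none ∨ X[o.start + o.len]? = none ∨
      X[s + o.len]? ≠ X[o.start + o.len]?)

/-- `L` is a labeling of the set `U` of unmatched positions of the genome `X`:
the target substrings of its operations are valid and partition `U`. -/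
structure IsLabeling {α : Type*} (X : List α) (U : ℕ → Prop) (L : Finset Op) :
    Prop where
  valid : ∀ o ∈ L, o.valid X
  unmatched : ∀ o ∈ L, ∀ p, o.covers p → U p
  covers : ∀ p, U p → ∃ o ∈ L, o.covers p
  disjoint : ∀ o ∈ L, ∀ o' ∈ L, ∀ p, o.covers p → o'.covers p → o = o'

/-- Arc of the duplication graph of a labeling: from the operation owning part
of the source occurrence of a duplication to the duplication itself. -/
def dupArc (L : Finset Op) (o o' : Op) : Prop :=
  o ∈ L ∧ o' ∈ L ∧ ∃ s, o'.src = some s ∧ ∃ p, o.covers p ∧ s ≤ p ∧ p < s + o'.len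

/-- A labeling is feasible if its duplication graph has no cycle. -/
def Feasible (L : Finset Op) : Prop := ∀ o, ¬ Relation.TransGen (dupArc L) o o

/-- Cost of a labeling. -/
def cost (L : Finset Op) : ℕ := ∑ o ∈ L, o.cost

/-- The operations of `L` labeling some position in `[lo, hi)`. -/
def restrict (L : Finset Op) (lo hi : ℕ) : Finset Op :=
  L.filter fun o => ∃ p ∈ Finset.Ico lo hi, o.covers p

/-- The total cost of the operations of `L` labeling positions in `[lo, hi)`. -/
def blockCost (L : Finset Op) (lo hi : ℕ) : ℕ := cost (restrict L lo hi)

/-! ### The reduction from Minimum Vertex Cover on cubic graphs -/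

/-- The alphabet of the reduction (all symbols are pairwise distinct). -/
inductive Sym (n : ℕ) : Type
  | s  (i : Fin n)
  | se (i j : Fin n)
  | x  (i : Fin n) (p : ℕ)
  | e  (i j : Fin n) (t : Fin 2)
  | z  (i : Fin n) (t : Fin 8)
  | w  (i : Fin n) (t : Fin 4)
  | u  (i : Fin n) (t : Fin 6)
deriving DecidableEq

variable {n : ℕ} (G : SimpleGraph (Fin n)) [DecidableRel G.Adj]

/-- The edges of `G` as pairs `(i, j)` with `i < j`, in lexicographic order. -/
def edgePairs : List (Fin n × Fin n) :=
  (List.finRange n).flatMap fun i =>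
    ((List.finRange n).filter fun j => decide (i < j ∧ G.Adj i j)).map fun j => (i, j)

/-- The edges incident to `i`, in edge order. -/
def incEdges (i : Fin n) : List (Fin n × Fin n) :=
  (edgePairs G).filter fun e => decide (e.1 = i ∨ e.2 = i)

/-- The `t`-th (`0`-based) edge incident to `i`. -/
def nthInc (i : Fin n) (t : ℕ) : Fin n × Fin n := (incEdges G i).getD t (i, i)

/-- The `0`-based index of edge `e` among the edges incident to `i`. -/
def edgeIdx (i : Fin n) (e : Fin n × Fin n) : ℕ := (incEdges G i).idxOf e

/-- Left part of the `i`-encoding of edge `e`. -/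
def encL (i : Fin n) (e : Fin n × Fin n) : List (Sym n) :=
  if i = e.1 then [.x i (edgeIdx G i e)] else [.e e.1 e.2 0, .e e.1 e.2 1]

/-- Right part of the `i`-encoding of edge `e`. -/
def encR (i : Fin n) (e : Fin n × Fin n) : List (Sym n) :=
  if i = e.1 then [.e e.1 e.2 0, .e e.1 e.2 1] else [.x i (edgeIdx G i e)]

/-- The `i`-encoding of edge `e`. -/
def enc (i : Fin n) (e : Fin n × Fin n) : List (Sym n) := encL G i e ++ encR G i e

/-- Block `B_{X-VE}(e)`. -/
def edgeBlockX (e : Fin n × Fin n) : List (Sym n) :=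
  [.se e.1 e.2, .x e.1 (edgeIdx G e.1 e), .e e.1 e.2 0, .e e.1 e.2 1,
   .x e.2 (edgeIdx G e.2 e)]

/-- Block `B_{X-VE}(v_i)`. -/
def vertexBlockX (i : Fin n) : List (Sym n) :=
  [.s i, .z i 0, .z i 1] ++ enc G i (nthInc G i 0) ++
  [.z i 2, .z i 3] ++ enc G i (nthInc G i 1) ++
  [.z i 4, .z i 5] ++ enc G i (nthInc G i 2) ++
  [.z i 6, .z i 7]

/-- Block `B_{X,A,1}(v_i) = B_{Y,A,1}(v_i)`. -/
def A1Block (i : Fin n) : List (Sym n) :=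
  [.w i 0, .z i 0, .z i 1, .w i 1, .z i 2, .z i 3,
   .w i 2, .z i 4, .z i 5, .w i 3, .z i 6, .z i 7]

/-- Block `B_{X,A,2}(v_i) = B_{Y,A,2}(v_i)`. -/
def A2Block (i : Fin n) : List (Sym n) :=
  [.u i 0, .z i 1] ++ encL G i (nthInc G i 0) ++ [.u i 1] ++ encR G i (nthInc G i 0) ++
  [.z i 2, .u i 2, .z i 3] ++ encL G i (nthInc G i 1) ++ [.u i 3] ++ encR G i (nthInc G i 1) ++
  [.z i 4, .u i 4, .z i 5] ++ encL G i (nthInc G i 2) ++ [.u i 5] ++ encR G i (nthInc G i 2) ++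
  [.z i 6]

/-- The genome `X` corresponding to the cubic graph `G`. -/
def genomeX : List (Sym n) :=
  ((List.finRange n).flatMap fun i => vertexBlockX G i) ++
  ((edgePairs G).flatMap fun e => edgeBlockX G e) ++
  ((List.finRange n).flatMap fun i => A1Block i ++ A2Block G i)

/-- The aligned genome `Y` (`none` denotes a gap). -/
def alignedY : List (Option (Sym n)) :=
  ((List.finRange n).flatMap fun i => some (.s i) :: List.replicate 17 none) ++
  ((edgePairs G).flatMap fun e => some (.se e.1 e.2) :: List.replicate 4 none) ++
  ((List.finRange n).flatMap fun i => (A1Block i ++ A2Block G i).map some)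

/-- The unmatched positions of `X` (those aligned with a gap of `Y`). -/
def UnmatchedX (p : ℕ) : Prop := (alignedY G)[p]? = some none

/-- Start position of `B_{X-VE}(v_i)` in `X`. -/
def vStart (i : Fin n) : ℕ := 18 * i.val

/-- Start position of `B_{X-VE}(e)` in `X`. -/
def eStart (e : Fin n × Fin n) : ℕ := 18 * n + 5 * (edgePairs G).idxOf e

/-- Start position of `B_{X,A,1}(v_i)` in `X` (`B_{X,A,2}(v_i)` starts 12 later). -/
def aStart (i : Fin n) : ℕ := 18 * n + 5 * (edgePairs G).length + 33 * i.val

/-- Offset of the `i`-encoding inside `B_{X-VE}(e)`. -/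
def encOff (i : Fin n) (e : Fin n × Fin n) : ℕ := if i = e.1 then 1 else 2

/-- The type-a labeling of `B_{X-VE}(v_i)`: four duplications coming from
`B_{X,A,1}(v_i)` (for the pairs of `z`-symbols) and three duplications coming
from the blocks of the three edges incident to `v_i` (for the encodings). -/
def typeA (i : Fin n) : Finset Op :=
  { ⟨vStart i + 1, 2, some (aStart G i + 1)⟩,
    ⟨vStart i + 6, 2, some (aStart G i + 4)⟩,
    ⟨vStart i + 11, 2, some (aStart G i + 7)⟩,
    ⟨vStart i + 16, 2, some (aStart G i + 10)⟩,
    ⟨vStart i + 3, 3, some (eStart G (nthInc G i 0) + encOff i (nthInc G i 0))⟩,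
    ⟨vStart i + 8, 3, some (eStart G (nthInc G i 1) + encOff i (nthInc G i 1))⟩,
    ⟨vStart i + 13, 3, some (eStart G (nthInc G i 2) + encOff i (nthInc G i 2))⟩ }

/-- The type-b labeling of `B_{X-VE}(v_i)`: six duplications coming from
`B_{X,A,2}(v_i)` and two losses of length one (for `z_{i,1}` and `z_{i,8}`). -/
def typeB (i : Fin n) : Finset Op :=
  let a := aStart G i + 12
  let l1 := (encL G i (nthInc G i 0)).length
  let l2 := (encL G i (nthInc G i 1)).length
  let l3 := (encL G i (nthInc G i 2)).length
  { ⟨vStart i + 1, 1, none⟩,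
    ⟨vStart i + 17, 1, none⟩,
    ⟨vStart i + 2, 1 + l1, some (a + 1)⟩,
    ⟨vStart i + 3 + l1, 4 - l1, some (a + 3 + l1)⟩,
    ⟨vStart i + 7, 1 + l2, some (a + 8)⟩,
    ⟨vStart i + 8 + l2, 4 - l2, some (a + 10 + l2)⟩,
    ⟨vStart i + 12, 1 + l3, some (a + 15)⟩,
    ⟨vStart i + 13 + l3, 4 - l3, some (a + 17 + l3)⟩ }

/-- The cost-2 labeling of `B_{X-VE}(e)` using a duplication coming from
`B_{X-VE}(v_i)` (where `i = e.1`) and a loss for the last character. -/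
def edgeLabA (e : Fin n × Fin n) : Finset Op :=
  { ⟨eStart G e + 1, 3, some (vStart e.1 + 3 + 5 * edgeIdx G e.1 e)⟩,
    ⟨eStart G e + 4, 1, none⟩ }

/-- The cost-2 labeling of `B_{X-VE}(e)` using a duplication coming from
`B_{X-VE}(v_j)` (where `j = e.2`) and a loss for the second character. -/
def edgeLabB (e : Fin n × Fin n) : Finset Op :=
  { ⟨eStart G e + 2, 3, some (vStart e.2 + 3 + 5 * edgeIdx G e.2 e)⟩,
    ⟨eStart G e + 1, 1, none⟩ }

/-- `C` is a vertex cover of `G`. -/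
def IsVC (C : Finset (Fin n)) : Prop := ∀ ⦃u v : Fin n⦄, G.Adj u v → u ∈ C ∨ v ∈ C

end MLA

namespace MLA

variable {n : ℕ} (G : SimpleGraph (Fin n)) [DecidableRel G.Adj]

lemma flatMap_const_length {α β : Type*} (f : β → List α) (k : ℕ) (l : List β)
    (h : ∀ b ∈ l, (f b).length = k) : (l.flatMap f).length = k * l.length := by
  induction l with
  | nil => simp
  | cons b t ih =>
    rw [List.flatMap_cons, List.length_append, h b (by simp),
      ih (fun b hb => h b (by simp [hb])), List.length_cons]
    ring

lemma flatMap_const_getElem? {α β : Type*} (f : β → List α) (k : ℕ) (l : List β)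
    (h : ∀ b ∈ l, (f b).length = k) {a r : ℕ} (hr : r < k) :
    (l.flatMap f)[k * a + r]? = l[a]?.bind fun b => (f b)[r]? := by
  induction l generalizing a with
  | nil => simp
  | cons b t ih =>
    have hb : (f b).length = k := h b (by simp)
    rw [List.flatMap_cons]
    cases a with
    | zero =>
      rw [List.getElem?_append, if_pos (by omega)]
      simp
    | succ a =>
      have hk : k * a + k = k * (a + 1) := by ring
      rw [List.getElem?_append, if_neg (by omega)]
      have h2 : k * (a + 1) + r - (f b).length = k * a + r := by omega
      rw [h2, ih (fun b hb => h b (by simp [hb]))]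
      simp

lemma length_encL (i : Fin n) (e : Fin n × Fin n) :
    (encL G i e).length + (encR G i e).length = 3 := by
  unfold encL encR; split_ifs <;> simp

lemma length_vertexBlockX (i : Fin n) : (vertexBlockX G i).length = 18 := by
  have h0 := length_encL G i (nthInc G i 0)
  have h1 := length_encL G i (nthInc G i 1)
  have h2 := length_encL G i (nthInc G i 2)
  unfold vertexBlockX enc
  simp only [List.length_append, List.length_cons, List.length_nil]
  omega

lemma length_A1Block (i : Fin n) : (A1Block (n := n) i).length = 12 := by
  simp [A1Block]

lemma length_A2Block (i : Fin n) : (A2Block G i).length = 21 := by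
  have h0 := length_encL G i (nthInc G i 0)
  have h1 := length_encL G i (nthInc G i 1)
  have h2 := length_encL G i (nthInc G i 2)
  unfold A2Block
  simp only [List.length_append, List.length_cons, List.length_nil]
  omega

lemma length_edgeBlockX (e : Fin n × Fin n) : (edgeBlockX G e).length = 5 := by
  simp [edgeBlockX]

lemma length_genomeX :
    (genomeX G).length = 18 * n + 5 * (edgePairs G).length + 33 * n := by
  rw [genomeX]
  rw [List.length_append, List.length_append]
  rw [flatMap_const_length _ 18 _ (fun b _ => length_vertexBlockX G b),
    flatMap_const_length _ 5 _ (fun b _ => length_edgeBlockX G b),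
    flatMap_const_length _ 33 _ (fun b _ => by
      rw [List.length_append, length_A1Block, length_A2Block])]
  simp [List.length_finRange]

end MLA

namespace MLA
section
variable {n : ℕ} (G : SimpleGraph (Fin n)) [DecidableRel G.Adj]

lemma genomeX_assoc :
    genomeX G =
      ((List.finRange n).flatMap fun i => vertexBlockX G i) ++
      ((((edgePairs G).flatMap fun e => edgeBlockX G e)) ++
      ((List.finRange n).flatMap fun i => A1Block i ++ A2Block G i)) := by
  simp only [genomeX, List.append_assoc]

lemma gxV {a r : ℕ} (ha : a < n) (hr : r < 18) :
    (genomeX G)[18 * a + r]? = (vertexBlockX G ⟨a, ha⟩)[r]? := by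
  rw [genomeX_assoc, List.getElem?_append,
    if_pos (by
      rw [flatMap_const_length _ 18 _ (fun b _ => length_vertexBlockX G b),
        List.length_finRange]
      omega),
    flatMap_const_getElem? _ 18 _ (fun b _ => length_vertexBlockX G b) hr]
  rw [List.getElem?_eq_getElem (by rw [List.length_finRange]; exact ha)]
  simp [List.getElem_finRange, Fin.cast]

lemma gxE {k r : ℕ} (hk : k < (edgePairs G).length) (hr : r < 5) :
    (genomeX G)[18 * n + (5 * k + r)]? =
      (edgeBlockX G ((edgePairs G)[k]'hk))[r]? := by
  rw [genomeX_assoc, List.getElem?_append,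
    if_neg (by
      rw [flatMap_const_length _ 18 _ (fun b _ => length_vertexBlockX G b),
        List.length_finRange]
      omega)]
  have h1 : 18 * n + (5 * k + r) -
      ((List.finRange n).flatMap fun i => vertexBlockX G i).length = 5 * k + r := by
    rw [flatMap_const_length _ 18 _ (fun b _ => length_vertexBlockX G b),
      List.length_finRange]
    omega
  rw [h1, List.getElem?_append,
    if_pos (by
      rw [flatMap_const_length _ 5 _ (fun b _ => length_edgeBlockX G b)]
      have : 5 * k + 5 ≤ 5 * (edgePairs G).length := by omega
      omega),
    flatMap_const_getElem? _ 5 _ (fun b _ => length_edgeBlockX G b) hr,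
    List.getElem?_eq_getElem hk]
  rfl

lemma gxA {a r : ℕ} (ha : a < n) (hr : r < 33) :
    (genomeX G)[18 * n + 5 * (edgePairs G).length + (33 * a + r)]? =
      ((A1Block ⟨a, ha⟩ : List (Sym n)) ++ A2Block G ⟨a, ha⟩)[r]? := by
  rw [genomeX_assoc, List.getElem?_append,
    if_neg (by
      rw [flatMap_const_length _ 18 _ (fun b _ => length_vertexBlockX G b),
        List.length_finRange]
      omega)]
  have h1 : 18 * n + 5 * (edgePairs G).length + (33 * a + r) -
      ((List.finRange n).flatMap fun i => vertexBlockX G i).length =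
      5 * (edgePairs G).length + (33 * a + r) := by
    rw [flatMap_const_length _ 18 _ (fun b _ => length_vertexBlockX G b),
      List.length_finRange]
    omega
  rw [h1, List.getElem?_append,
    if_neg (by
      rw [flatMap_const_length _ 5 _ (fun b _ => length_edgeBlockX G b)]
      omega)]
  have h2 : 5 * (edgePairs G).length + (33 * a + r) -
      ((edgePairs G).flatMap fun e => edgeBlockX G e).length = 33 * a + r := by
    rw [flatMap_const_length _ 5 _ (fun b _ => length_edgeBlockX G b)]
    omega
  rw [h2, flatMap_const_getElem? _ 33 _
      (fun b _ => by rw [List.length_append, length_A1Block, length_A2Block]) hr,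
    List.getElem?_eq_getElem (by rw [List.length_finRange]; exact ha)]
  simp [List.getElem_finRange, Fin.cast]

end
end MLA

namespace MLA
section
variable {n : ℕ} (G : SimpleGraph (Fin n)) [DecidableRel G.Adj]

lemma alignedY_assoc :
    alignedY G =
      ((List.finRange n).flatMap fun i =>
        some (Sym.s i) :: List.replicate 17 none) ++
      (((edgePairs G).flatMap fun e =>
        some (Sym.se e.1 e.2) :: List.replicate 4 none) ++
      ((List.finRange n).flatMap fun i => (A1Block i ++ A2Block G i).map some)) := by
  simp only [alignedY, List.append_assoc]

lemma length_yblock1 (i : Fin n) :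
    (some (Sym.s i) :: List.replicate 17 (none : Option (Sym n))).length = 18 := by
  simp

lemma length_yblock2 (e : Fin n × Fin n) :
    (some (Sym.se e.1 e.2) :: List.replicate 4 (none : Option (Sym n))).length = 5 := by
  simp

lemma unmatchedX_edge {k r : ℕ} (hk : k < (edgePairs G).length)
    (h1 : 1 ≤ r) (h4 : r ≤ 4) : UnmatchedX G (18 * n + (5 * k + r)) := by
  rw [UnmatchedX, alignedY_assoc, List.getElem?_append,
    if_neg (by
      rw [flatMap_const_length _ 18 _ (fun b _ => length_yblock1 b),
        List.length_finRange]
      omega)]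
  have hx : 18 * n + (5 * k + r) -
      ((List.finRange n).flatMap fun i =>
        some (Sym.s i) :: List.replicate 17 (none : Option (Sym n))).length
      = 5 * k + r := by
    rw [flatMap_const_length _ 18 _ (fun b _ => length_yblock1 b),
      List.length_finRange]
    omega
  rw [hx, List.getElem?_append,
    if_pos (by
      rw [flatMap_const_length _ 5 _ (fun b _ => length_yblock2 b)]
      have : 5 * k + 5 ≤ 5 * (edgePairs G).length := by omega
      omega),
    flatMap_const_getElem? _ 5 _ (fun b _ => length_yblock2 b) (by omega : r < 5),
    List.getElem?_eq_getElem hk]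
  have : ∃ r', r = r' + 1 := ⟨r - 1, by omega⟩
  obtain ⟨r', hr'⟩ := this
  subst hr'
  simp only [Option.bind_some, List.getElem?_cons_succ]
  rw [List.getElem?_eq_getElem (by simp; omega), List.getElem_replicate]

lemma unmatchedX_ge {j : ℕ} (h : UnmatchedX G (18 * n + j)) :
    j < 5 * (edgePairs G).length ∧ j % 5 ≠ 0 := by
  rw [UnmatchedX, alignedY_assoc, List.getElem?_append,
    if_neg (by
      rw [flatMap_const_length _ 18 _ (fun b _ => length_yblock1 b),
        List.length_finRange]
      omega)] at h
  have hx : 18 * n + j -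
      ((List.finRange n).flatMap fun i =>
        some (Sym.s i) :: List.replicate 17 (none : Option (Sym n))).length = j := by
    rw [flatMap_const_length _ 18 _ (fun b _ => length_yblock1 b),
      List.length_finRange]
    omega
  rw [hx, List.getElem?_append] at h
  split_ifs at h with hlt
  · rw [flatMap_const_length _ 5 _ (fun b _ => length_yblock2 b)] at hlt
    refine ⟨hlt, ?_⟩
    intro h5
    have hj : j = 5 * (j / 5) + j % 5 := (Nat.div_add_mod j 5).symm
    rw [hj, flatMap_const_getElem? _ 5 _ (fun b _ => length_yblock2 b)
      (Nat.mod_lt _ (by omega))] at h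
    rw [h5] at h
    have hk : j / 5 < (edgePairs G).length := by
      have := Nat.div_add_mod j 5
      omega
    rw [List.getElem?_eq_getElem hk] at h
    simp at h
  · exfalso
    have hmem := List.mem_of_getElem? h
    simp only [List.mem_flatMap, List.mem_map] at hmem
    obtain ⟨i, _, c, _, hc⟩ := hmem
    exact Option.some_ne_none c hc

end
end MLA

namespace MLA
section
variable {n : ℕ} (G : SimpleGraph (Fin n)) [DecidableRel G.Adj]

lemma vertex_analysis (v a b : Fin n) (r : ℕ)
    (h0 : (vertexBlockX G v)[r]? = some (Sym.e a b 0)) :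
    1 ≤ r ∧ r + 2 < 18 ∧
      ∀ i' p j' q', (vertexBlockX G v)[r - 1]? = some (Sym.x i' p) →
        (vertexBlockX G v)[r + 2]? = some (Sym.x j' q') → False := by
  have hr : r < 18 := by
    have := (List.getElem?_eq_some_iff.mp h0).1
    rwa [length_vertexBlockX] at this
  unfold vertexBlockX enc encL encR at h0 ⊢
  split_ifs at h0 ⊢ <;>
    simp only [List.cons_append, List.nil_append] at h0 ⊢ <;>
    interval_cases r <;>
    first
      | (exfalso; simp at h0; done)
      | (refine ⟨by norm_num, by norm_num, fun i' p j' q' hA hB => ?_⟩;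
         simp at hA hB)
end
end MLA

namespace MLA
section
variable {n : ℕ} (G : SimpleGraph (Fin n)) [DecidableRel G.Adj]

lemma edge_analysis (e' : Fin n × Fin n) (a b : Fin n) (r : ℕ)
    (h0 : (edgeBlockX G e')[r]? = some (Sym.e a b 0)) :
    r = 2 ∧ e'.1 = a ∧ e'.2 = b := by
  have hr : r < 5 := by
    have := (List.getElem?_eq_some_iff.mp h0).1
    rwa [length_edgeBlockX] at this
  unfold edgeBlockX at h0
  interval_cases r <;> simp_all

set_option maxHeartbeats 3000000 in
lemma apart_analysis (v a b : Fin n) (r : ℕ)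
    (h0 : ((A1Block v : List (Sym n)) ++ A2Block G v)[r]? = some (Sym.e a b 0)) :
    1 ≤ r ∧ ∀ i' p, ((A1Block v : List (Sym n)) ++ A2Block G v)[r - 1]? =
      some (Sym.x i' p) → False := by
  have hr : r < 33 := by
    have := (List.getElem?_eq_some_iff.mp h0).1
    rwa [List.length_append, length_A1Block, length_A2Block] at this
  unfold A1Block A2Block encL encR at h0 ⊢
  split_ifs at h0 ⊢ <;>
    simp only [List.cons_append, List.nil_append] at h0 ⊢ <;>
    interval_cases r <;>
    first
      | (exfalso; simp at h0; done)
      | (refine ⟨by norm_num, fun i' p hA => ?_⟩; simp at hA)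
end
end MLA

namespace MLA
section
variable {n : ℕ} (G : SimpleGraph (Fin n)) [DecidableRel G.Adj]

lemma nodup_edgePairs : (edgePairs G).Nodup := by
  rw [edgePairs, List.nodup_flatMap]
  constructor
  · intro i _
    exact ((List.nodup_finRange n).filter _).map
      (fun a b hab => by simpa using hab)
  · refine List.Pairwise.imp ?_ (List.nodup_finRange n)
    intro i1 i2 hne x hx1 hx2
    simp only [Function.onFun, List.mem_map] at hx1 hx2
    obtain ⟨j1, -, rfl⟩ := hx1
    obtain ⟨j2, -, h2⟩ := hx2
    exact hne (congrArg Prod.fst h2).symm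

lemma indexOf_spec' {α} [BEq α] [LawfulBEq α] {l : List α} {a : α} (h : a ∈ l) :
    ∃ hk : l.idxOf a < l.length, l[l.idxOf a]'hk = a := by
  induction l with
  | nil => simp at h
  | cons b t ih =>
    by_cases hba : b == a
    · have hz : (b :: t).idxOf a = 0 := by simp [List.idxOf_cons, hba]
      refine ⟨by simp [hz], ?_⟩
      simp only [hz, List.getElem_cons_zero]
      exact eq_of_beq hba
    · have hmem : a ∈ t := by
        rcases List.mem_cons.mp h with rfl | hm
        · simp at hba
        · exact hm
      obtain ⟨hlt, hget⟩ := ih hmem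
      have hsucc : (b :: t).idxOf a = t.idxOf a + 1 := by
        simp [List.idxOf_cons, hba]
      refine ⟨by simp [hsucc]; omega, ?_⟩
      simp only [hsucc, List.getElem_cons_succ]
      exact hget

lemma cost_pos {o : Op} (h : o.valid (genomeX G)) : 1 ≤ o.cost := by
  rw [Op.cost]
  split
  · exact h.1
  · exact le_refl 1

end
end MLA

namespace MLA
section
variable {n : ℕ} (G : SimpleGraph (Fin n)) [DecidableRel G.Adj]

/-- The heart of the argument: the 4-character pattern of an edge block occurs
nowhere else in `genomeX G`. -/
lemma no_other_occurrence {k : ℕ} (hk : k < (edgePairs G).length)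
    (he : (edgePairs G)[k]'hk = e) (s : ℕ)
    (hC0 : (genomeX G)[s]? = some (Sym.x e.1 (edgeIdx G e.1 e)))
    (hC1 : (genomeX G)[s + 1]? = some (Sym.e e.1 e.2 0))
    (hC3 : (genomeX G)[s + 3]? = some (Sym.x e.2 (edgeIdx G e.2 e))) :
    s = 18 * n + 5 * k + 1 := by
  set q := s + 1 with hqdef
  have hqlen : q < (genomeX G).length := (List.getElem?_eq_some_iff.mp hC1).1
  rw [length_genomeX] at hqlen
  by_cases hq1 : q < 18 * n
  · -- inside a vertex block : impossible
    exfalso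
    have hd := Nat.div_add_mod q 18
    have hm : q % 18 < 18 := Nat.mod_lt _ (by omega)
    have ha : q / 18 < n := by omega
    have h0 : (vertexBlockX G ⟨q / 18, ha⟩)[q % 18]? = some (Sym.e e.1 e.2 0) := by
      rw [← gxV G ha hm]
      rw [show 18 * (q / 18) + q % 18 = q from by omega]
      exact hC1
    obtain ⟨hr1, hr2, himp⟩ := vertex_analysis G _ _ _ _ h0
    refine himp e.1 (edgeIdx G e.1 e) e.2 (edgeIdx G e.2 e) ?_ ?_
    · rw [← gxV G ha (by omega : q % 18 - 1 < 18),
        show 18 * (q / 18) + (q % 18 - 1) = s from by omega]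
      exact hC0
    · rw [← gxV G ha hr2, show 18 * (q / 18) + (q % 18 + 2) = s + 3 from by omega]
      exact hC3
  push_neg at hq1
  by_cases hq2 : q < 18 * n + 5 * (edgePairs G).length
  · -- inside an edge block : must be our very block
    set j := q - 18 * n with hjdef
    have hd := Nat.div_add_mod j 5
    have hm : j % 5 < 5 := Nat.mod_lt _ (by omega)
    have hk' : j / 5 < (edgePairs G).length := by omega
    have h0 : (edgeBlockX G ((edgePairs G)[j / 5]'hk'))[j % 5]? =
        some (Sym.e e.1 e.2 0) := by
      rw [← gxE G hk' hm, show 18 * n + (5 * (j / 5) + j % 5) = q from by omega]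
      exact hC1
    obtain ⟨hr2, hfst, hsnd⟩ := edge_analysis G _ _ _ _ h0
    have heq : (edgePairs G)[j / 5]'hk' = e := Prod.ext hfst hsnd
    have hkk : j / 5 = k := by
      have hnd := nodup_edgePairs G
      have := heq.trans he.symm
      exact (List.Nodup.getElem_inj_iff hnd).mp this
    omega
  push_neg at hq2
  · -- inside the augmented part : impossible
    exfalso
    set j := q - (18 * n + 5 * (edgePairs G).length) with hjdef
    have hd := Nat.div_add_mod j 33
    have hm : j % 33 < 33 := Nat.mod_lt _ (by omega)
    have ha : j / 33 < n := by omega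
    have h0 : ((A1Block ⟨j / 33, ha⟩ : List (Sym n)) ++ A2Block G ⟨j / 33, ha⟩)[j % 33]? =
        some (Sym.e e.1 e.2 0) := by
      rw [← gxA G ha hm, show 18 * n + 5 * (edgePairs G).length + (33 * (j / 33) + j % 33)
        = q from by omega]
      exact hC1
    obtain ⟨hr1, himp⟩ := apart_analysis G _ _ _ _ h0
    refine himp e.1 (edgeIdx G e.1 e) ?_
    rw [← gxA G ha (by omega : j % 33 - 1 < 33),
      show 18 * n + 5 * (edgePairs G).length + (33 * (j / 33) + (j % 33 - 1)) = s
        from by omega]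
    exact hC0

end
end MLA

open MLA in
/-- For every edge `{v_i, v_j}` of a cubic graph `G` and every
feasible labeling of `(X, Y)`, the total cost of the operations labeling the
four unmatched characters of the block `B_{X-VE}(e_{i,j})` is at least 2. -/
theorem edgeBlock_cost_lower_bound {n : ℕ} (G : SimpleGraph (Fin n))
    [DecidableRel G.Adj] (hcubic : ∀ v : Fin n, G.degree v = 3)
    (L : Finset Op) (hL : IsLabeling (genomeX G) (UnmatchedX G) L)
    (hfeas : Feasible L) (e : Fin n × Fin n) (he : e ∈ edgePairs G) :
    2 ≤ blockCost L (eStart G e) (eStart G e + 5) := by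
  classical
  obtain ⟨hk', hgete'⟩ := indexOf_spec' he
  obtain ⟨k, hkdef⟩ : ∃ k, k = (edgePairs G).idxOf e := ⟨_, rfl⟩
  have hk : k < (edgePairs G).length := hkdef ▸ hk'
  have hB : eStart G e = 18 * n + 5 * k := by subst hkdef; rfl
  set B := eStart G e with hBdef
  have hgete : (edgePairs G)[k]'hk = e := by subst hkdef; exact hgete'
  -- the four unmatched positions
  have hU : ∀ r, 1 ≤ r → r ≤ 4 → UnmatchedX G (B + r) := by
    intro r h1 h4
    rw [hB, show 18 * n + 5 * k + r = 18 * n + (5 * k + r) from by omega]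
    exact unmatchedX_edge G hk h1 h4
  have hNotU_B : ¬ UnmatchedX G B := by
    intro h
    rw [hB, show 18 * n + 5 * k = 18 * n + (5 * k) from rfl] at h
    have := (unmatchedX_ge G h).2
    omega
  have hNotU_B5 : ¬ UnmatchedX G (B + 5) := by
    intro h
    rw [hB, show 18 * n + 5 * k + 5 = 18 * n + (5 * k + 5) from by omega] at h
    have := (unmatchedX_ge G h).2
    omega
  -- genomeX on the edge block
  have hXr : ∀ r, r < 5 → (genomeX G)[B + r]? = (edgeBlockX G e)[r]? := by
    intro r hr
    rw [hB, show 18 * n + 5 * k + r = 18 * n + (5 * k + r) from by omega,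
      gxE G hk hr, hgete]
  -- an operation covering B+1
  obtain ⟨o1, ho1L, ho1c⟩ := hL.covers (B + 1) (hU 1 (by omega) (by omega))
  have hmemR : ∀ o ∈ L, ∀ r, 1 ≤ r → r ≤ 4 → o.covers (B + r) →
      o ∈ restrict L B (B + 5) := by
    intro o hoL r h1 h4 hc
    rw [restrict, Finset.mem_filter]
    exact ⟨hoL, ⟨B + r, Finset.mem_Ico.mpr ⟨by omega, by omega⟩, hc⟩⟩
  have ho1R : o1 ∈ restrict L B (B + 5) := hmemR o1 ho1L 1 (by omega) (by omega) ho1c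
  by_cases hall : ∀ o' ∈ restrict L B (B + 5), o' = o1
  · -- a single operation covers the whole block
    have hcov : ∀ r, 1 ≤ r → r ≤ 4 → o1.covers (B + r) := by
      intro r h1 h4
      obtain ⟨o', ho'L, ho'c⟩ := hL.covers (B + r) (hU r h1 h4)
      rw [← hall o' (hmemR o' ho'L r h1 h4 ho'c)]
      exact ho'c
    obtain ⟨hs1, hs2⟩ := hcov 1 (by omega) (by omega)
    obtain ⟨hs3, hs4⟩ := hcov 4 (by omega) (by omega)
    have hstart : o1.start = B + 1 := by
      by_contra hne
      exact hNotU_B (hL.unmatched o1 ho1L B ⟨by omega, by omega⟩)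
    have hlen : o1.len = 4 := by
      by_contra hne
      have h5 : B + 5 < o1.start + o1.len := by omega
      exact hNotU_B5 (hL.unmatched o1 ho1L (B + 5) ⟨by omega, by omega⟩)
    cases hsrc : o1.src with
    | none =>
      have hRsing : restrict L B (B + 5) = {o1} := by
        apply Finset.eq_singleton_iff_unique_mem.mpr
        exact ⟨ho1R, hall⟩
      rw [blockCost, hRsing, cost, Finset.sum_singleton, Op.cost, if_pos hsrc, hlen]
      omega
    | some s =>
      exfalso
      obtain ⟨-, -, hdup⟩ := hL.valid o1 ho1L
      obtain ⟨hne, -, hchars⟩ := hdup s hsrc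
      have hch : ∀ t, t < 4 → (genomeX G)[s + t]? = (edgeBlockX G e)[1 + t]? := by
        intro t ht
        rw [hchars t (by omega), hstart,
          show B + 1 + t = B + (1 + t) from by omega, hXr (1 + t) (by omega)]
      have hC0 := hch 0 (by omega)
      have hC1 := hch 1 (by omega)
      have hC3 := hch 3 (by omega)
      simp only [edgeBlockX, Nat.add_zero] at hC0 hC1 hC3
      rw [show (1 : ℕ) + 1 = 2 from rfl] at hC1
      rw [show (1 : ℕ) + 3 = 4 from rfl] at hC3
      simp only [List.getElem?_cons_succ, List.getElem?_cons_zero] at hC0 hC1 hC3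
      have hocc := no_other_occurrence G hk hgete s hC0 hC1 hC3
      apply hne
      rw [hstart, hB]
      exact hocc
  · -- at least two operations intersect the block
    push_neg at hall
    obtain ⟨o2, ho2R, hne2⟩ := hall
    have hsub : ({o2, o1} : Finset Op) ⊆ restrict L B (B + 5) := by
      intro x hx
      rcases Finset.mem_insert.mp hx with rfl | hx
      · exact ho2R
      · rw [Finset.mem_singleton.mp hx]; exact ho1R
    have hco1 : 1 ≤ o1.cost := cost_pos G (hL.valid o1 ho1L)
    have hco2 : 1 ≤ o2.cost :=
      cost_pos G (hL.valid o2 (Finset.mem_filter.mp ho2R).1)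
    calc 2 ≤ o2.cost + o1.cost := by omega
    _ = ∑ o ∈ ({o2, o1} : Finset Op), o.cost := (Finset.sum_pair hne2).symm
    _ ≤ blockCost L B (B + 5) := Finset.sum_le_sum_of_subset hsub
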